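/- arXiv:2512.11803 — 2 statements merged into one kernel-verified Lean document; each statement's English description precedes it below -/
import Mathlib

section
/- The family 𝒜 of achievement sets is closed in the hyperspace of nonempty compact subsets of [0,1] with the Hausdorff metric: if (E^{(n)}) is a sequence of sets in 𝒜 converging in the Hausdorff distance to a nonempty compact set S ⊆ [0,1], then S ∈ 𝒜. -/
open Metric Filter

/-- The achievement set of a series: the set of all its subsums. -/
def achievementSet (a : ℕ → ℝ) : Set ℝ :=
  {x | ∃ A : Set ℕ, x = ∑' n : A, a n}

/-- The family of achievement sets of convergent series of non-negative terms with sum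
at most `1`. -/
def achvFamily : Set (Set ℝ) :=
  {E | ∃ a : ℕ → ℝ, (∀ n, 0 ≤ a n) ∧ Summable a ∧ (∑' n, a n) ≤ 1 ∧ E = achievementSet a}

open Set
open scoped Classical

noncomputable section AchvAux

def aS (a : ℕ → ℝ) (A : Set ℕ) : ℝ := ∑' n, A.indicator a n

theorem aS_mem (a : ℕ → ℝ) (A : Set ℕ) : aS a A ∈ achievementSet a :=
  ⟨A, (tsum_subtype A a).symm⟩

theorem mem_achv_iff {a : ℕ → ℝ} {x : ℝ} :
    x ∈ achievementSet a ↔ ∃ A : Set ℕ, x = aS a A := by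
  unfold achievementSet aS
  constructor
  · rintro ⟨A, rfl⟩; exact ⟨A, tsum_subtype A a⟩
  · rintro ⟨A, rfl⟩; exact ⟨A, (tsum_subtype A a).symm⟩

theorem aS_nonneg {a : ℕ → ℝ} (ha : ∀ n, 0 ≤ a n) (A : Set ℕ) : 0 ≤ aS a A :=
  tsum_nonneg fun n => Set.indicator_nonneg (fun m _ => ha m) n

theorem aS_le_tsum {a : ℕ → ℝ} (ha : ∀ n, 0 ≤ a n) (hs : Summable a) (A : Set ℕ) :
    aS a A ≤ ∑' n, a n :=
  Summable.tsum_le_tsum (fun n => Set.indicator_le_self' (fun m _ => ha m) n) (hs.indicator A) hs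

theorem aS_mono {a : ℕ → ℝ} (ha : ∀ n, 0 ≤ a n) (hs : Summable a) {A B : Set ℕ}
    (hAB : A ⊆ B) : aS a A ≤ aS a B :=
  Summable.tsum_le_tsum (fun n => Set.indicator_le_indicator_of_subset hAB (fun m => ha m) n)
    (hs.indicator A) (hs.indicator B)

theorem aS_union {a : ℕ → ℝ} (hs : Summable a) {A B : Set ℕ} (h : Disjoint A B) :
    aS a (A ∪ B) = aS a A + aS a B := by
  unfold aS
  rw [← Summable.tsum_add (hs.indicator A) (hs.indicator B)]
  congr 1
  exact Set.indicator_union_of_disjoint h a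

theorem aS_empty (a : ℕ → ℝ) : aS a ∅ = 0 := by simp [aS]

def headSum (a : ℕ → ℝ) (A : Set ℕ) (k : ℕ) : ℝ :=
  ∑ j ∈ Finset.range k, if j ∈ A then a j else 0

theorem aS_tail_eq (a : ℕ → ℝ) (hs : Summable a) (A : Set ℕ) (k : ℕ) :
    aS a (A ∩ {j | k ≤ j}) = ∑' i, (A.indicator a) (i + k) := by
  have hsum : Summable ((A ∩ {j | k ≤ j}).indicator a) := hs.indicator _
  have h0 : ∀ j ∈ Finset.range k, (A ∩ {j | k ≤ j}).indicator a j = 0 := by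
    intro j hj
    rw [Finset.mem_range] at hj
    exact Set.indicator_of_notMem (fun hh => absurd hh.2 (by simpa using hj)) a
  rw [aS, (Summable.sum_add_tsum_nat_add k hsum).symm, Finset.sum_eq_zero h0, zero_add]
  apply tsum_congr
  intro i
  by_cases h : i + k ∈ A
  · simp [Set.indicator_apply, h, Nat.le_add_left]
  · simp [Set.indicator_apply, h]

theorem aS_tail_le {a : ℕ → ℝ} (ha : ∀ n, 0 ≤ a n) (hs : Summable a) (A : Set ℕ) (k : ℕ) :
    aS a (A ∩ {j | k ≤ j}) ≤ ∑' i, a (i + k) := by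
  rw [aS_tail_eq a hs A k]
  exact Summable.tsum_le_tsum (fun i => Set.indicator_le_self' (fun m _ => ha m) (i + k))
    (((summable_nat_add_iff k).2 (hs.indicator A)))
    ((summable_nat_add_iff k).2 hs)

theorem aS_split {a : ℕ → ℝ} (hs : Summable a) (A : Set ℕ) (k : ℕ) :
    aS a A = headSum a A k + aS a (A ∩ {j | k ≤ j}) := by
  rw [aS_tail_eq a hs A k, aS, ← Summable.sum_add_tsum_nat_add k (hs.indicator A)]
  congr 1

theorem headSum_eq_aS {a : ℕ → ℝ} (hs : Summable a) (A : Set ℕ) (k : ℕ) :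
    headSum a A k = aS a (A ∩ {j | j < k}) := by
  rw [aS_split hs (A ∩ {j | j < k}) k]
  have h1 : headSum a (A ∩ {j | j < k}) k = headSum a A k := by
    apply Finset.sum_congr rfl
    intro j hj
    rw [Finset.mem_range] at hj
    by_cases h : j ∈ A <;> simp [h, hj]
  have h2 : A ∩ {j | j < k} ∩ {j | k ≤ j} = ∅ := by
    ext j
    simp only [Set.mem_inter_iff, Set.mem_setOf_eq, Set.mem_empty_iff_false, iff_false]
    rintro ⟨⟨_, hl⟩, hr⟩
    omega
  rw [h2, aS_empty, h1, add_zero]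

theorem headSum_mem {a : ℕ → ℝ} (hs : Summable a) (A : Set ℕ) (k : ℕ) :
    headSum a A k ∈ achievementSet a :=
  mem_achv_iff.2 ⟨_, headSum_eq_aS hs A k⟩

theorem headSum_nonneg {a : ℕ → ℝ} (ha : ∀ n, 0 ≤ a n) (A : Set ℕ) (k : ℕ) :
    0 ≤ headSum a A k :=
  Finset.sum_nonneg fun j _ => by by_cases h : j ∈ A <;> simp [h, ha j]

theorem abs_headSum_sub_le (a b : ℕ → ℝ) (A : Set ℕ) (k : ℕ) :
    |headSum a A k - headSum b A k| ≤ ∑ j ∈ Finset.range k, |a j - b j| := by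
  rw [headSum, headSum, ← Finset.sum_sub_distrib]
  refine le_trans (Finset.abs_sum_le_sum_abs _ _) (Finset.sum_le_sum fun j _ => ?_)
  by_cases h : j ∈ A <;> simp [h, abs_nonneg]

theorem zero_mem_achv (a : ℕ → ℝ) : (0:ℝ) ∈ achievementSet a := by
  have := aS_mem a ∅
  rwa [aS_empty] at this

theorem achv_subset {a : ℕ → ℝ} (ha : ∀ n, 0 ≤ a n) (hs : Summable a) :
    achievementSet a ⊆ Set.Icc 0 (∑' n, a n) := by
  intro x hx
  obtain ⟨A, rfl⟩ := mem_achv_iff.1 hx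
  exact ⟨aS_nonneg ha A, aS_le_tsum ha hs A⟩

theorem achv_bounded {a : ℕ → ℝ} (ha : ∀ n, 0 ≤ a n) (hs : Summable a) :
    Bornology.IsBounded (achievementSet a) :=
  (Metric.isBounded_Icc _ _).subset (achv_subset ha hs)

theorem achv_isCompact {a : ℕ → ℝ} (ha : ∀ n, 0 ≤ a n) (hs : Summable a) :
    IsCompact (achievementSet a) := by
  set F : (ℕ → Bool) → ℝ := fun x => ∑' n, ({m | x m = true}).indicator a n with hF
  have key : ∀ i, (fun x : ℕ → Bool => ({m | x m = true}).indicator a i)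
      = (fun b : Bool => if b = true then a i else 0) ∘ (fun x => x i) :=
    fun i => funext fun x => by simp [Set.indicator_apply]
  have hcont : Continuous F := by
    apply continuous_tsum (u := a) (fun i => ?_) hs (fun n x => ?_)
    · rw [key i]
      exact continuous_of_discreteTopology.comp (continuous_apply i)
    · by_cases h : x n = true <;>
        simp [Set.indicator_apply, h, Real.norm_eq_abs, abs_of_nonneg (ha n), ha n]
  have hrange : achievementSet a = Set.range F := by
    ext x
    rw [mem_achv_iff]
    constructor
    · rintro ⟨A, rfl⟩
      refine ⟨fun n => decide (n ∈ A), ?_⟩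
      have hset : {m | decide (m ∈ A) = true} = A := by ext m; simp
      show (∑' n, ({m | decide (m ∈ A) = true}).indicator a n) = aS a A
      rw [hset]; rfl
    · rintro ⟨x, rfl⟩
      exact ⟨{m | x m = true}, rfl⟩
  rw [hrange]
  exact isCompact_range hcont

def greedy (c : ℕ → ℝ) (t : ℝ) : ℕ → ℝ
  | 0 => 0
  | (k+1) => if greedy c t k + c k ≤ t then greedy c t k + c k else greedy c t k

def gSet (c : ℕ → ℝ) (t : ℝ) : Set ℕ := {k | greedy c t k + c k ≤ t}

theorem greedy_le {c : ℕ → ℝ} {t : ℝ} (ht : 0 ≤ t) : ∀ k, greedy c t k ≤ t := by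
  intro k
  induction k with
  | zero => exact ht
  | succ k ih =>
    by_cases h : greedy c t k + c k ≤ t
    · rw [greedy, if_pos h]; exact h
    · rw [greedy, if_neg h]; exact ih

theorem greedy_eq_headSum (c : ℕ → ℝ) (t : ℝ) (k : ℕ) :
    greedy c t k = headSum c (gSet c t) k := by
  induction k with
  | zero => simp [greedy, headSum]
  | succ k ih =>
    rw [headSum, Finset.sum_range_succ, ← headSum, ← ih]
    by_cases h : greedy c t k + c k ≤ t
    · rw [greedy, if_pos h, if_pos (show k ∈ gSet c t from h)]
    · rw [greedy, if_neg h, if_neg (show k ∉ gSet c t from h), add_zero]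

theorem greedy_tendsto {c : ℕ → ℝ} (hs : Summable c) (t : ℝ) :
    Tendsto (greedy c t) atTop (nhds (aS c (gSet c t))) := by
  have h := (hs.indicator (gSet c t)).hasSum.tendsto_sum_nat
  refine h.congr fun k => ?_
  rw [greedy_eq_headSum]
  apply Finset.sum_congr rfl
  intro j _
  simp [Set.indicator_apply]

theorem greedy_aS_le {c : ℕ → ℝ} (hs : Summable c) {t : ℝ} (ht : 0 ≤ t) :
    aS c (gSet c t) ≤ t :=
  le_of_tendsto (greedy_tendsto hs t) (Eventually.of_forall (greedy_le ht))

theorem greedy_mono {c : ℕ → ℝ} (hc : ∀ j, 0 ≤ c j) (t : ℝ) : Monotone (greedy c t) := by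
  apply monotone_nat_of_le_succ
  intro k
  by_cases h : greedy c t k + c k ≤ t
  · rw [greedy, if_pos h]; linarith [hc k]
  · rw [greedy, if_neg h]

theorem greedy_le_aS {c : ℕ → ℝ} (hc : ∀ j, 0 ≤ c j) (hs : Summable c) (t : ℝ) (k : ℕ) :
    greedy c t k ≤ aS c (gSet c t) :=
  ge_of_tendsto (greedy_tendsto hs t)
    (eventually_atTop.2 ⟨k, fun _ hm => greedy_mono hc t hm⟩)

/-- Kakeya-type approximation: if all terms are ≤ ε, greedy subsums are ε-dense. -/
theorem greedy_close {c : ℕ → ℝ} (hc : ∀ j, 0 ≤ c j) (hs : Summable c) {t ε : ℝ}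
    (ht0 : 0 ≤ t) (htle : t ≤ ∑' n, c n) (hcε : ∀ j, c j ≤ ε) :
    t ≤ aS c (gSet c t) + ε := by
  by_cases h : gSet c t = Set.univ
  · have : aS c (gSet c t) = ∑' n, c n := by
      rw [h]; unfold aS; simp
    have hε : 0 ≤ ε := le_trans (hc 0) (hcε 0)
    rw [this]; linarith
  · obtain ⟨k, hk⟩ : ∃ k, k ∉ gSet c t := by
      by_contra hh
      push_neg at hh
      exact h (Set.eq_univ_of_forall hh)
    have h1 : t < greedy c t k + c k := lt_of_not_ge hk
    have h2 : greedy c t k ≤ aS c (gSet c t) := greedy_le_aS hc hs t k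
    have := hcε k
    linarith

/-- Exact greedy representation when each term is at most the remaining tail. -/
theorem greedy_exact {c : ℕ → ℝ} (hc : ∀ j, 0 ≤ c j) (hs : Summable c) {t : ℝ}
    (ht0 : 0 ≤ t) (htle : t ≤ ∑' n, c n)
    (hcs : ∀ j, c j ≤ ∑' i, c (i + (j + 1))) :
    aS c (gSet c t) = t := by
  have hinv : ∀ k, t - greedy c t k ≤ ∑' i, c (i + k) := by
    intro k
    induction k with
    | zero => simpa [greedy] using htle
    | succ k ih =>
      have hsplit : ∑' i, c (i + k) = c k + ∑' i, c (i + (k + 1)) := by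
        have h1 := Summable.tsum_eq_zero_add ((summable_nat_add_iff k).2 hs)
        rw [h1]
        simp only [zero_add]
        congr 1
        apply tsum_congr; intro i; congr 1; omega
      by_cases h : greedy c t k + c k ≤ t
      · rw [greedy, if_pos h]
        rw [hsplit] at ih
        linarith
      · rw [greedy, if_neg h]
        push_neg at h
        have := hcs k
        linarith
  have h1 : Tendsto (fun k => t - greedy c t k) atTop (nhds (t - aS c (gSet c t))) :=
    tendsto_const_nhds.sub (greedy_tendsto hs t)
  have h2 : Tendsto (fun k => ∑' i, c (i + k)) atTop (nhds 0) := by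
    have := tendsto_sum_nat_add c
    exact this
  have h3 : t - aS c (gSet c t) ≤ 0 :=
    le_of_tendsto_of_tendsto' h1 h2 hinv
  have h4 : aS c (gSet c t) ≤ t := greedy_aS_le hs ht0
  linarith

def gg (δ : ℝ) : ℕ → ℝ := fun k => δ / 2 / 2 ^ k

theorem gg_nonneg {δ : ℝ} (hδ : 0 ≤ δ) : ∀ k, 0 ≤ gg δ k := fun k => by
  unfold gg; positivity

theorem gg_summable (δ : ℝ) : Summable (gg δ) := by
  have := (summable_geometric_two).mul_left (δ / 2)
  refine this.congr fun k => ?_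
  unfold gg
  rw [div_div]
  field_simp
  rw [mul_assoc, ← mul_pow]; norm_num

theorem gg_tsum (δ : ℝ) : ∑' k, gg δ k = δ := tsum_geometric_two' δ

theorem gg_tail (δ : ℝ) (j : ℕ) : (∑' i, gg δ (i + (j + 1))) = gg δ j := by
  have h := tsum_geometric_two' (δ / 2 / 2 ^ j)
  unfold gg
  rw [← h]
  apply tsum_congr
  intro i
  rw [pow_add, pow_add]
  ring

theorem gg_le_tail {δ : ℝ} (j : ℕ) : gg δ j ≤ ∑' i, gg δ (i + (j + 1)) :=
  le_of_eq (gg_tail δ j).symm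

def il (b g : ℕ → ℝ) : ℕ → ℝ := fun n => if n % 2 = 0 then b (n / 2) else g (n / 2)

theorem il_even (b g : ℕ → ℝ) (k : ℕ) : il b g (2 * k) = b k := by
  have h1 : 2 * k % 2 = 0 := by omega
  have h2 : 2 * k / 2 = k := by omega
  simp [il, h1, h2]

theorem il_odd (b g : ℕ → ℝ) (k : ℕ) : il b g (2 * k + 1) = g k := by
  have h1 : (2 * k + 1) % 2 = 1 := by omega
  have h2 : (2 * k + 1) / 2 = k := by omega
  simp [il, h1, h2]

theorem il_nonneg {b g : ℕ → ℝ} (hb : ∀ n, 0 ≤ b n) (hg : ∀ n, 0 ≤ g n) (n : ℕ) :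
    0 ≤ il b g n := by
  unfold il; split_ifs <;> [exact hb _; exact hg _]

theorem il_hasSum {b g : ℕ → ℝ} {sb sg : ℝ} (hb : HasSum b sb) (hg : HasSum g sg) :
    HasSum (il b g) (sb + sg) := by
  have h1 : (fun k => il b g (2 * k)) = b := funext (il_even b g)
  have h2 : (fun k => il b g (2 * k + 1)) = g := funext (il_odd b g)
  refine HasSum.even_add_odd ?_ ?_
  · rw [h1]; exact hb
  · rw [h2]; exact hg

theorem il_aS {b g : ℕ → ℝ} (hb : Summable b) (hg : Summable g) (A : Set ℕ) :
    aS (il b g) A = aS b {m | 2 * m ∈ A} + aS g {m | 2 * m + 1 ∈ A} := by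
  have h1 : (fun k => A.indicator (il b g) (2 * k)) = ({m | 2 * m ∈ A}).indicator b := by
    funext k
    by_cases h : 2 * k ∈ A <;> simp [Set.indicator_apply, h, il_even]
  have h2 : (fun k => A.indicator (il b g) (2 * k + 1)) = ({m | 2 * m + 1 ∈ A}).indicator g := by
    funext k
    by_cases h : 2 * k + 1 ∈ A <;> simp [Set.indicator_apply, h, il_odd]
  have he : HasSum (fun k => A.indicator (il b g) (2 * k)) (aS b {m | 2 * m ∈ A}) := by
    rw [h1]; exact (hb.indicator _).hasSum
  have ho : HasSum (fun k => A.indicator (il b g) (2 * k + 1)) (aS g {m | 2 * m + 1 ∈ A}) := by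
    rw [h2]; exact (hg.indicator _).hasSum
  exact (HasSum.even_add_odd he ho).tsum_eq

def joinSet (A₀ A₁ : Set ℕ) : Set ℕ := {n | if n % 2 = 0 then n / 2 ∈ A₀ else n / 2 ∈ A₁}

theorem joinSet_even (A₀ A₁ : Set ℕ) : {m | 2 * m ∈ joinSet A₀ A₁} = A₀ := by
  ext m
  have h1 : 2 * m % 2 = 0 := by omega
  have h2 : 2 * m / 2 = m := by omega
  simp [joinSet, h1, h2]

theorem joinSet_odd (A₀ A₁ : Set ℕ) : {m | 2 * m + 1 ∈ joinSet A₀ A₁} = A₁ := by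
  ext m
  have h1 : (2 * m + 1) % 2 = 1 := by omega
  have h2 : (2 * m + 1) / 2 = m := by omega
  simp [joinSet, h1, h2]
end AchvAux

section Sorting

theorem approx_sorted {a : ℕ → ℝ} (ha : ∀ n, 0 ≤ a n) (hs : Summable a)
    (hle : ∑' n, a n ≤ 1) {ε : ℝ} (hε : 0 < ε) :
    ∃ p : ℕ → ℝ, (∀ j, 0 ≤ p j) ∧ Antitone p ∧ Summable p ∧ (∑' j, p j) ≤ 1 ∧
      hausdorffDist (achievementSet a) (achievementSet p) ≤ ε := by
  -- choose the cut point
  obtain ⟨K, hK⟩ : ∃ K, (∑' i, a (i + K)) ≤ ε := by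
    have := tendsto_sum_nat_add a
    rw [Metric.tendsto_atTop] at this
    obtain ⟨K, hK⟩ := this ε hε
    refine ⟨K, ?_⟩
    have := hK K le_rfl
    rw [Real.dist_eq, sub_zero] at this
    calc (∑' i, a (i + K)) ≤ |∑' i, a (i + K)| := le_abs_self _
    _ ≤ ε := by
        refine le_of_lt ?_
        convert this using 3
  set σ : Equiv.Perm (Fin K) := Tuple.sort (fun i : Fin K => -(a i)) with hσ
  have hmono := Tuple.monotone_sort (fun i : Fin K => -(a i))
  set p : ℕ → ℝ := fun j => if h : j < K then a (σ ⟨j, h⟩) else 0 with hp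
  have hp_pos : ∀ (j : ℕ) (h : j < K), p j = a (σ ⟨j, h⟩) := fun j h => dif_pos h
  have hp_zero : ∀ j, K ≤ j → p j = 0 := fun j h => dif_neg (by omega)
  have hp0 : ∀ j, 0 ≤ p j := by
    intro j
    by_cases h : j < K
    · rw [hp_pos j h]; exact ha _
    · rw [hp_zero j (by omega)]
  have hpa : ∀ i : Fin K, p i = a (σ i) := by
    intro i
    rw [hp_pos i i.isLt]
  have hanti : Antitone p := by
    intro j j' hjj'
    by_cases h' : j' < K
    · have h : j < K := lt_of_le_of_lt hjj' h'
      rw [hp_pos j h, hp_pos j' h']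
      have := hmono (show (⟨j, h⟩ : Fin K) ≤ ⟨j', h'⟩ from hjj')
      simpa using this
    · rw [hp_zero j' (by omega)]
      exact hp0 j
  have hpz : ∀ j ∉ Finset.range K, p j = 0 := by
    intro j hj
    rw [Finset.mem_range] at hj
    exact hp_zero j (by omega)
  have hps : Summable p := summable_of_ne_finset_zero hpz
  -- head sums via Fin
  have hfin : ∀ (q : ℕ → ℝ) (B : Set ℕ),
      headSum q B K = ∑ i : Fin K, if (i : ℕ) ∈ B then q i else 0 := by
    intro q B
    rw [headSum, ← Fin.sum_univ_eq_sum_range (fun j => if j ∈ B then q j else 0) K]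
  -- total sum
  have htsum : (∑' j, p j) = ∑ j ∈ Finset.range K, a j := by
    rw [tsum_eq_sum hpz, ← Fin.sum_univ_eq_sum_range (fun j => p j) K,
      ← Fin.sum_univ_eq_sum_range (fun j => a j) K]
    rw [show (∑ i : Fin K, p i) = ∑ i : Fin K, a (σ i) from Finset.sum_congr rfl
      (fun i _ => hpa i)]
    exact Equiv.sum_comp σ (fun i => a i)
  have hple : (∑' j, p j) ≤ 1 := by
    rw [htsum]
    exact le_trans (Summable.sum_le_tsum _ (fun j _ => ha j) hs) hle
  refine ⟨p, hp0, hanti, hps, hple, ?_⟩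
  -- correspondence of head subsums
  have fwd : ∀ A : Set ℕ, ∃ B : Set ℕ, headSum a A K = headSum p B K := by
    intro A
    refine ⟨{j | ∃ h : j < K, ((σ ⟨j, h⟩ : Fin K) : ℕ) ∈ A}, ?_⟩
    rw [hfin, hfin]
    refine Fintype.sum_equiv σ.symm _ _ fun i => ?_
    have hmem : ((σ.symm i : Fin K) : ℕ) ∈ {j | ∃ h : j < K, ((σ ⟨j, h⟩ : Fin K) : ℕ) ∈ A}
        ↔ (i : ℕ) ∈ A := by
      simp only [Set.mem_setOf_eq]
      constructor
      · rintro ⟨h, hh⟩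
        simpa [Fin.eta, Equiv.apply_symm_apply] using hh
      · intro h
        exact ⟨(σ.symm i).isLt, by simpa [Fin.eta, Equiv.apply_symm_apply] using h⟩
    by_cases h : (i : ℕ) ∈ A
    · rw [if_pos h, if_pos (hmem.2 h), hpa, Equiv.apply_symm_apply]
    · rw [if_neg h, if_neg (fun hh => h (hmem.1 hh))]
  have bwd : ∀ B : Set ℕ, ∃ A : Set ℕ, headSum p B K = headSum a A K := by
    intro B
    refine ⟨{m | ∃ h : m < K, ((σ.symm ⟨m, h⟩ : Fin K) : ℕ) ∈ B}, ?_⟩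
    rw [hfin, hfin]
    refine Fintype.sum_equiv σ _ _ fun i => ?_
    have hmem : ((σ i : Fin K) : ℕ) ∈ {m | ∃ h : m < K, ((σ.symm ⟨m, h⟩ : Fin K) : ℕ) ∈ B}
        ↔ (i : ℕ) ∈ B := by
      simp only [Set.mem_setOf_eq]
      constructor
      · rintro ⟨h, hh⟩
        simpa [Fin.eta, Equiv.symm_apply_apply] using hh
      · intro h
        exact ⟨(σ i).isLt, by simpa [Fin.eta, Equiv.symm_apply_apply] using h⟩
    by_cases h : (i : ℕ) ∈ B
    · rw [if_pos h, if_pos (hmem.2 h), hpa]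
    · rw [if_neg h, if_neg (fun hh => h (hmem.1 hh))]
  -- Hausdorff bound
  apply hausdorffDist_le_of_mem_dist hε.le
  · intro x hx
    obtain ⟨A, rfl⟩ := mem_achv_iff.1 hx
    obtain ⟨B, hB⟩ := fwd A
    refine ⟨headSum p B K, headSum_mem hps B K, ?_⟩
    rw [aS_split hs A K, Real.dist_eq, ← hB, add_sub_cancel_left, abs_of_nonneg
      (aS_nonneg ha _)]
    exact le_trans (aS_tail_le ha hs A K) hK
  · intro y hy
    obtain ⟨B, rfl⟩ := mem_achv_iff.1 hy
    obtain ⟨A, hA⟩ := bwd B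
    have htail0 : aS p (B ∩ {j | K ≤ j}) = 0 := by
      refine le_antisymm ?_ (aS_nonneg hp0 _)
      refine le_trans (aS_tail_le hp0 hps B K) (le_of_eq ?_)
      have : ∀ i : ℕ, p (i + K) = 0 := fun i => hp_zero _ (by omega)
      simp [this]
    refine ⟨headSum a A K, headSum_mem hs A K, ?_⟩
    rw [aS_split hps B K, htail0, add_zero, hA, Real.dist_eq, sub_self, abs_zero]
    exact hε.le

end Sorting

section Core

theorem aS_of_indicator (f : ℕ → ℝ) (S B : Set ℕ) :
    aS (S.indicator f) B = aS f (B ∩ S) := by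
  unfold aS
  apply tsum_congr
  intro n
  rw [Set.indicator_indicator]

theorem tsum_indicator_tail (f : ℕ → ℝ) (hfs : Summable f) (k : ℕ) :
    (∑' n, (({j | k ≤ j}).indicator f) n) = ∑' i, f (i + k) := by
  have h := aS_tail_eq f hfs Set.univ k
  rw [Set.univ_inter, Set.indicator_univ] at h
  exact h

theorem greedy_tail_approx {f : ℕ → ℝ} (hf0 : ∀ n, 0 ≤ f n) (hfs : Summable f) (k : ℕ)
    {ε t : ℝ} (hfε : ∀ j, k ≤ j → f j ≤ ε) (hε0 : 0 ≤ ε) (ht0 : 0 ≤ t)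
    (ht : t ≤ ∑' i, f (i + k)) :
    ∃ B : Set ℕ, B ⊆ {j | k ≤ j} ∧ aS f B ≤ t ∧ t ≤ aS f B + ε := by
  set c : ℕ → ℝ := ({j | k ≤ j}).indicator f with hc
  have hc0 : ∀ n, 0 ≤ c n := fun n => Set.indicator_nonneg (fun m _ => hf0 m) n
  have hcs : Summable c := hfs.indicator _
  have hctsum : (∑' n, c n) = ∑' i, f (i + k) := tsum_indicator_tail f hfs k
  have hcε : ∀ j, c j ≤ ε := by
    intro j
    by_cases h : k ≤ j
    · have hcj : c j = f j := Set.indicator_of_mem (show j ∈ {j | k ≤ j} from h) f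
      rw [hcj]; exact hfε j h
    · have hcj : c j = 0 := Set.indicator_of_notMem (show j ∉ {j | k ≤ j} from h) f
      rw [hcj]; exact hε0
  refine ⟨gSet c t ∩ {j | k ≤ j}, Set.inter_subset_right, ?_, ?_⟩
  · rw [← aS_of_indicator]
    exact greedy_aS_le hcs ht0
  · rw [← aS_of_indicator]
    exact greedy_close hc0 hcs ht0 (by rw [hctsum]; exact ht) hcε

theorem gg_surj {δ : ℝ} (hδ : 0 ≤ δ) {u : ℝ} (hu0 : 0 ≤ u) (huδ : u ≤ δ) :
    ∃ A : Set ℕ, aS (gg δ) A = u :=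
  ⟨gSet (gg δ) u, greedy_exact (gg_nonneg hδ) (gg_summable δ) hu0
    (by rw [gg_tsum]; exact huδ) (fun j => gg_le_tail j)⟩

theorem T_mem {b : ℕ → ℝ} (hbsum : Summable b) {δ : ℝ} (hδ : 0 ≤ δ)
    (A₀ : Set ℕ) {u : ℝ} (hu0 : 0 ≤ u) (huδ : u ≤ δ) :
    aS b A₀ + u ∈ achievementSet (il b (gg δ)) := by
  obtain ⟨A₁, hA₁⟩ := gg_surj hδ hu0 huδ
  refine mem_achv_iff.2 ⟨joinSet A₀ A₁, ?_⟩
  rw [il_aS hbsum (gg_summable δ), joinSet_even, joinSet_odd, hA₁]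

theorem T_elt {b : ℕ → ℝ} (hb0 : ∀ n, 0 ≤ b n) (hbsum : Summable b) {δ : ℝ} (hδ : 0 ≤ δ)
    {y : ℝ} (hy : y ∈ achievementSet (il b (gg δ))) :
    ∃ (A₀ : Set ℕ) (u : ℝ), 0 ≤ u ∧ u ≤ δ ∧ y = aS b A₀ + u := by
  obtain ⟨C, rfl⟩ := mem_achv_iff.1 hy
  rw [il_aS hbsum (gg_summable δ)]
  refine ⟨_, _, aS_nonneg (gg_nonneg hδ) _, ?_, rfl⟩
  have := aS_le_tsum (gg_nonneg hδ) (gg_summable δ) {m | 2 * m + 1 ∈ C}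
  rwa [gg_tsum] at this

end Core

theorem core_conv (P : ℕ → ℕ → ℝ) (hP0 : ∀ i j, 0 ≤ P i j) (hPanti : ∀ i, Antitone (P i))
    (hPsum : ∀ i, Summable (P i))
    (b : ℕ → ℝ) (hb0 : ∀ j, 0 ≤ b j) (hbsum : Summable b)
    (τ δ : ℝ) (hδ : 0 ≤ δ) (hδeq : δ = τ - ∑' j, b j)
    (hbpt : ∀ j, Tendsto (fun i => P i j) atTop (nhds (b j)))
    (htail : ∀ k, Tendsto (fun i => ∑' j, P i (j + k)) atTop
      (nhds (τ - ∑ j ∈ Finset.range k, b j))) :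
    Tendsto (fun i => hausdorffDist (achievementSet (P i))
      (achievementSet (il b (gg δ)))) atTop (nhds 0) := by
  rw [Metric.tendsto_atTop]
  intro ε hε
  have hε8 : 0 < ε / 8 := by linarith
  -- choose the cut point k
  obtain ⟨k, hk⟩ : ∃ k, (∑' i, b (i + k)) ≤ ε / 8 := by
    have h := tendsto_sum_nat_add b
    rw [Metric.tendsto_atTop] at h
    obtain ⟨k, hk⟩ := h (ε / 8) hε8
    have := hk k le_rfl
    rw [Real.dist_eq, sub_zero] at this
    exact ⟨k, le_of_lt (lt_of_le_of_lt (le_abs_self _) (by convert this using 3))⟩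
  have hbk_small : ∀ j, k ≤ j → b j ≤ ε / 8 := by
    intro j hj
    have hsum : Summable (fun i : ℕ => b (i + k)) := (summable_nat_add_iff k).2 hbsum
    have h1 : b (j - k + k) ≤ ∑' (i : ℕ), b (i + k) :=
      Summable.le_tsum hsum (j - k) (fun m _ => hb0 (m + k))
    rw [Nat.sub_add_cancel hj] at h1
    exact le_trans h1 hk
  -- notation
  set rk : ℝ := τ - ∑ j ∈ Finset.range k, b j with hrk_def
  have hrk : rk = (∑' j, b (j + k)) + δ := by
    have hsplit := Summable.sum_add_tsum_nat_add k hbsum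
    rw [hrk_def, hδeq]
    linarith [hsplit]
  have hrk0 : 0 ≤ rk := by
    rw [hrk]
    have : 0 ≤ ∑' j, b (j + k) := tsum_nonneg (fun j => hb0 _)
    linarith
  -- eventual bounds
  obtain ⟨N₁, hN₁⟩ : ∃ N, ∀ i ≥ N, (∑ j ∈ Finset.range k, |P i j - b j|) ≤ ε / 8 := by
    have h : Tendsto (fun i => ∑ j ∈ Finset.range k, |P i j - b j|) atTop (nhds 0) := by
      have := tendsto_finset_sum (Finset.range k)
        (fun j _ => (((hbpt j).sub tendsto_const_nhds).abs :
          Tendsto (fun i => |P i j - b j|) atTop (nhds (|b j - b j|))))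
      simpa using this
    rw [Metric.tendsto_atTop] at h
    obtain ⟨N, hN⟩ := h (ε / 8) hε8
    refine ⟨N, fun i hi => ?_⟩
    have := hN i hi
    rw [Real.dist_eq, sub_zero] at this
    exact le_of_lt (lt_of_le_of_lt (le_abs_self _) this)
  obtain ⟨N₂, hN₂⟩ : ∃ N, ∀ i ≥ N, |(∑' j, P i (j + k)) - rk| ≤ ε / 8 := by
    have h := htail k
    rw [Metric.tendsto_atTop] at h
    obtain ⟨N, hN⟩ := h (ε / 8) hε8
    exact ⟨N, fun i hi => le_of_lt (by rw [← Real.dist_eq]; exact hN i hi)⟩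
  obtain ⟨N₃, hN₃⟩ : ∃ N, ∀ i ≥ N, P i k ≤ ε / 4 := by
    have h := hbpt k
    rw [Metric.tendsto_atTop] at h
    obtain ⟨N, hN⟩ := h (ε / 8) hε8
    refine ⟨N, fun i hi => ?_⟩
    have h1 := hN i hi
    rw [Real.dist_eq] at h1
    have h2 := hbk_small k le_rfl
    have h3 := abs_lt.1 h1
    linarith [h3.1, h3.2]
  refine ⟨max N₁ (max N₂ N₃), fun i hi => ?_⟩
  have hi1 : i ≥ N₁ := le_trans (le_max_left _ _) hi
  have hi2 : i ≥ N₂ := le_trans (le_trans (le_max_left _ _) (le_max_right N₁ _)) hi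
  have hi3 : i ≥ N₃ := le_trans (le_trans (le_max_right _ _) (le_max_right N₁ _)) hi
  set tP : ℝ := ∑' j, P i (j + k) with htP_def
  have htP0 : 0 ≤ tP := tsum_nonneg (fun j => hP0 i _)
  have htPrk : |tP - rk| ≤ ε / 8 := hN₂ i hi2
  have hΔ : (∑ j ∈ Finset.range k, |P i j - b j|) ≤ ε / 8 := hN₁ i hi1
  have hPik : ∀ j, k ≤ j → P i j ≤ ε / 4 := fun j hj => le_trans (hPanti i hj) (hN₃ i hi3)
  -- the two directions
  have dir1 : ∀ x ∈ achievementSet (P i),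
      ∃ y ∈ achievementSet (il b (gg δ)), dist x y ≤ ε / 2 := by
    intro x hx
    obtain ⟨A, rfl⟩ := mem_achv_iff.1 hx
    rw [aS_split (hPsum i) A k]
    set tA : ℝ := aS (P i) (A ∩ {j | k ≤ j}) with htA_def
    have htA0 : 0 ≤ tA := aS_nonneg (hP0 i) _
    have htAle : tA ≤ tP := aS_tail_le (hP0 i) (hPsum i) A k
    set s : ℝ := min tA rk with hs_def
    have hs0 : 0 ≤ s := le_min htA0 hrk0
    have hsrk : s ≤ rk := min_le_right _ _
    have htAs : |tA - s| ≤ ε / 8 := by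
      rcases le_total tA rk with h | h
      · rw [hs_def, min_eq_left h, sub_self, abs_zero]; linarith
      · rw [hs_def, min_eq_right h, abs_of_nonneg (by linarith)]
        have : tA - rk ≤ tP - rk := by linarith
        calc tA - rk ≤ tP - rk := this
        _ ≤ |tP - rk| := le_abs_self _
        _ ≤ ε / 8 := htPrk
    -- approximate s by aS b B + u
    obtain ⟨B, hBsub, u, hu0, huδ, hsBu⟩ : ∃ (B : Set ℕ), B ⊆ {j | k ≤ j} ∧
        ∃ u, 0 ≤ u ∧ u ≤ δ ∧ |s - (aS b B + u)| ≤ ε / 8 := by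
      by_cases hsδ : s ≤ δ
      · refine ⟨∅, Set.empty_subset _, s, hs0, hsδ, ?_⟩
        rw [aS_empty, zero_add, sub_self, abs_zero]
        linarith
      · push_neg at hsδ
        obtain ⟨B, hBsub, hB1, hB2⟩ := greedy_tail_approx hb0 hbsum k hbk_small hε8.le
          (t := s - δ) (by linarith) (by rw [hrk] at hsrk; linarith)
        refine ⟨B, hBsub, δ, hδ, le_rfl, ?_⟩
        rw [abs_le]
        constructor <;> linarith
    have hdisj : Disjoint (A ∩ {j | j < k}) B := by
      rw [Set.disjoint_left]
      rintro j ⟨_, hj1⟩ hj2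
      exact absurd (hBsub hj2) (by simpa using hj1)
    refine ⟨aS b ((A ∩ {j | j < k}) ∪ B) + u, T_mem hbsum hδ _ hu0 huδ, ?_⟩
    rw [aS_union hbsum hdisj, ← headSum_eq_aS hbsum A k, Real.dist_eq]
    have habs1 : |headSum (P i) A k - headSum b A k| ≤ ε / 8 :=
      le_trans (abs_headSum_sub_le _ _ A k) hΔ
    have : headSum (P i) A k + tA - (headSum b A k + aS b B + u)
        = (headSum (P i) A k - headSum b A k) + ((tA - s) + (s - (aS b B + u))) := by ring
    rw [this]
    calc |(headSum (P i) A k - headSum b A k) + ((tA - s) + (s - (aS b B + u)))|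
        ≤ |headSum (P i) A k - headSum b A k| + |(tA - s) + (s - (aS b B + u))| := abs_add_le _ _
      _ ≤ |headSum (P i) A k - headSum b A k| + (|tA - s| + |s - (aS b B + u)|) := by
          linarith [abs_add_le (tA - s) (s - (aS b B + u))]
      _ ≤ ε / 8 + (ε / 8 + ε / 8) := by linarith
      _ ≤ ε / 2 := by linarith
  have dir2 : ∀ y ∈ achievementSet (il b (gg δ)),
      ∃ x ∈ achievementSet (P i), dist x y ≤ ε / 2 := by
    intro y hy
    obtain ⟨A₀, u, hu0, huδ, rfl⟩ := T_elt hb0 hbsum hδ hy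
    rw [aS_split hbsum A₀ k]
    set v : ℝ := aS b (A₀ ∩ {j | k ≤ j}) with hv_def
    have hv0 : 0 ≤ v := aS_nonneg hb0 _
    have hvle : v ≤ ∑' j, b (j + k) := aS_tail_le hb0 hbsum A₀ k
    set w : ℝ := v + u with hw_def
    have hw0 : 0 ≤ w := by linarith
    have hwrk : w ≤ rk := by rw [hrk]; linarith
    set s : ℝ := min w tP with hs_def
    have hs0 : 0 ≤ s := le_min hw0 htP0
    have hstP : s ≤ tP := min_le_right _ _
    have hws : |w - s| ≤ ε / 8 := by
      rcases le_total w tP with h | h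
      · rw [hs_def, min_eq_left h, sub_self, abs_zero]; linarith
      · rw [hs_def, min_eq_right h, abs_of_nonneg (by linarith)]
        calc w - tP ≤ rk - tP := by linarith
        _ ≤ |tP - rk| := by rw [abs_sub_comm]; exact le_abs_self _
        _ ≤ ε / 8 := htPrk
    obtain ⟨B, hBsub, hB1, hB2⟩ := greedy_tail_approx (hP0 i) (hPsum i) k hPik
      (by linarith) hs0 hstP
    have hdisj : Disjoint (A₀ ∩ {j | j < k}) B := by
      rw [Set.disjoint_left]
      rintro j ⟨_, hj1⟩ hj2
      exact absurd (hBsub hj2) (by simpa using hj1)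
    refine ⟨aS (P i) ((A₀ ∩ {j | j < k}) ∪ B), aS_mem _ _, ?_⟩
    rw [aS_union (hPsum i) hdisj, ← headSum_eq_aS (hPsum i) A₀ k, Real.dist_eq]
    have habs1 : |headSum (P i) A₀ k - headSum b A₀ k| ≤ ε / 8 :=
      le_trans (abs_headSum_sub_le _ _ A₀ k) hΔ
    have hrw : headSum (P i) A₀ k + aS (P i) B - (headSum b A₀ k + v + u)
        = (headSum (P i) A₀ k - headSum b A₀ k) + ((aS (P i) B - s) + (s - w)) := by
      rw [hw_def]; ring
    rw [hrw]
    have h1 : |aS (P i) B - s| ≤ ε / 4 := by rw [abs_le]; constructor <;> linarith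
    have h2 : |s - w| ≤ ε / 8 := by rw [abs_sub_comm]; exact hws
    calc |(headSum (P i) A₀ k - headSum b A₀ k) + ((aS (P i) B - s) + (s - w))|
        ≤ |headSum (P i) A₀ k - headSum b A₀ k| + (|aS (P i) B - s| + |s - w|) := by
          have t1 := abs_add_le (headSum (P i) A₀ k - headSum b A₀ k) ((aS (P i) B - s) + (s - w))
          have t2 := abs_add_le (aS (P i) B - s) (s - w)
          linarith
      _ ≤ ε / 8 + (ε / 4 + ε / 8) := by linarith
      _ ≤ ε / 2 := by linarith
  have hdH : hausdorffDist (achievementSet (P i)) (achievementSet (il b (gg δ))) ≤ ε / 2 := by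
    apply hausdorffDist_le_of_mem_dist (by linarith) dir1
    intro y hy
    obtain ⟨x, hx, hd⟩ := dir2 y hy
    exact ⟨x, hx, by rwa [dist_comm]⟩
  rw [Real.dist_eq, sub_zero, abs_of_nonneg hausdorffDist_nonneg]
  linarith

theorem achvFamily_closed (Eseq : ℕ → Set ℝ) (hE : ∀ n, Eseq n ∈ achvFamily)
    (S : Set ℝ) (hSne : S.Nonempty) (hSc : IsCompact S) (hSsub : S ⊆ Set.Icc 0 1)
    (hconv : Tendsto (fun n => hausdorffDist (Eseq n) S) atTop (nhds 0)) :
    S ∈ achvFamily := by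
  -- step 1: sorted approximations
  have happrox : ∀ n : ℕ, ∃ p : ℕ → ℝ, (∀ j, 0 ≤ p j) ∧ Antitone p ∧ Summable p ∧
      (∑' j, p j) ≤ 1 ∧ hausdorffDist (Eseq n) (achievementSet p) ≤ 1 / ((n : ℝ) + 1) := by
    intro n
    obtain ⟨a, ha0, hasum, hale, haeq⟩ := hE n
    obtain ⟨p, h1, h2, h3, h4, h5⟩ := approx_sorted ha0 hasum hale
      (ε := 1 / ((n : ℝ) + 1)) (by positivity)
    exact ⟨p, h1, h2, h3, h4, by rwa [haeq]⟩
  choose p hp0 hpanti hpsum hple hpd using happrox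
  have hEne : ∀ n, (Eseq n).Nonempty ∧ Bornology.IsBounded (Eseq n) := by
    intro n
    obtain ⟨a, ha0, hasum, hale, haeq⟩ := hE n
    rw [haeq]
    exact ⟨⟨0, zero_mem_achv a⟩, achv_bounded ha0 hasum⟩
  have hPne : ∀ n, (achievementSet (p n)).Nonempty := fun n => ⟨0, zero_mem_achv _⟩
  have hPbd : ∀ n, Bornology.IsBounded (achievementSet (p n)) :=
    fun n => achv_bounded (hp0 n) (hpsum n)
  have hSbd : Bornology.IsBounded S := hSc.isBounded
  -- d(E(p n), S) → 0
  have hconv2 : Tendsto (fun n => hausdorffDist (achievementSet (p n)) S) atTop (nhds 0) := by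
    refine squeeze_zero (f := fun n : ℕ => hausdorffDist (achievementSet (p n)) S)
      (g := fun n : ℕ => 1 / ((n : ℝ) + 1) + hausdorffDist (Eseq n) S)
      (fun n => hausdorffDist_nonneg) (fun n => ?_) ?_
    · have fin1 : EMetric.hausdorffEdist (achievementSet (p n)) (Eseq n) ≠ ⊤ :=
        hausdorffEdist_ne_top_of_nonempty_of_bounded (hPne n) (hEne n).1 (hPbd n) (hEne n).2
      calc hausdorffDist (achievementSet (p n)) S
          ≤ hausdorffDist (achievementSet (p n)) (Eseq n) + hausdorffDist (Eseq n) S :=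
            hausdorffDist_triangle fin1
        _ ≤ 1 / ((n : ℝ) + 1) + hausdorffDist (Eseq n) S := by
            have h := hpd n
            rw [hausdorffDist_comm] at h
            linarith
    · have h0 : Tendsto (fun n : ℕ => 1 / ((n : ℝ) + 1)) atTop (nhds 0) :=
        tendsto_one_div_add_atTop_nhds_zero_nat
      simpa using h0.add hconv
  -- subsequence extraction
  have hmem : ∀ n j, p n j ∈ Set.Icc (0:ℝ) 1 := by
    intro n j
    have h1 : p n j ≤ ∑' m, p n m := Summable.le_tsum (hpsum n) j (fun m _ => hp0 n m)
    exact ⟨hp0 n j, le_trans h1 (hple n)⟩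
  have htot_mem : ∀ n, (∑' j, p n j) ∈ Set.Icc (0:ℝ) 1 :=
    fun n => ⟨tsum_nonneg (hp0 n), hple n⟩
  set q : ℕ → (ℕ → Set.Icc (0:ℝ) 1) := fun n j => match j with
    | 0 => ⟨∑' m, p n m, htot_mem n⟩
    | (j'+1) => ⟨p n j', hmem n j'⟩
    with hq
  obtain ⟨ℓ, -, φ, hφmono, hφconv⟩ :=
    IsCompact.tendsto_subseq (x := q) isCompact_univ (fun n => Set.mem_univ _)
  have hpt : ∀ j, Tendsto (fun i => ((q (φ i) j : ℝ))) atTop (nhds ((ℓ j : ℝ))) :=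
    fun j => (continuous_subtype_val.tendsto (ℓ j)).comp ((tendsto_pi_nhds.1 hφconv) j)
  set τ : ℝ := (ℓ 0 : ℝ) with hτdef
  set b : ℕ → ℝ := fun j => (ℓ (j+1) : ℝ) with hbdef
  have htot : Tendsto (fun i => ∑' m, p (φ i) m) atTop (nhds τ) := hpt 0
  have hbpt : ∀ j, Tendsto (fun i => p (φ i) j) atTop (nhds (b j)) := fun j => hpt (j+1)
  -- b facts
  have hb0 : ∀ j, 0 ≤ b j :=
    fun j => le_of_tendsto_of_tendsto' tendsto_const_nhds (hbpt j) (fun i => hp0 _ j)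
  have hbanti : Antitone b :=
    fun j j' h => le_of_tendsto_of_tendsto' (hbpt j') (hbpt j) (fun i => hpanti _ h)
  have hhead : ∀ m, Tendsto (fun i => ∑ j ∈ Finset.range m, p (φ i) j) atTop
      (nhds (∑ j ∈ Finset.range m, b j)) :=
    fun m => tendsto_finset_sum _ (fun j _ => hbpt j)
  have hble : ∀ m, (∑ j ∈ Finset.range m, b j) ≤ τ :=
    fun m => le_of_tendsto_of_tendsto' (hhead m) htot
      (fun i => Summable.sum_le_tsum _ (fun j _ => hp0 _ j) (hpsum _))
  have hbsum : Summable b := summable_of_sum_range_le hb0 hble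
  have hbtsum : (∑' j, b j) ≤ τ := Summable.tsum_le_of_sum_range_le hbsum hble
  have hτ1 : τ ≤ 1 := le_of_tendsto' htot (fun i => hple _)
  set δ : ℝ := τ - ∑' j, b j with hδdef
  have hδ : 0 ≤ δ := by rw [hδdef]; linarith
  have htail : ∀ k, Tendsto (fun i => ∑' j, p (φ i) (j + k)) atTop
      (nhds (τ - ∑ j ∈ Finset.range k, b j)) := by
    intro k
    have h1 : ∀ i, (∑' j, p (φ i) (j + k))
        = (∑' m, p (φ i) m) - ∑ j ∈ Finset.range k, p (φ i) j := by
      intro i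
      have h2 := Summable.sum_add_tsum_nat_add k (hpsum (φ i))
      linarith
    exact (htot.sub (hhead k)).congr (fun i => (h1 i).symm)
  -- core convergence
  have hcore := core_conv (fun i => p (φ i)) (fun i => hp0 (φ i)) (fun i => hpanti (φ i))
    (fun i => hpsum (φ i)) b hb0 hbsum τ δ hδ hδdef hbpt htail
  -- the limit candidate
  have hc0 : ∀ n, 0 ≤ il b (gg δ) n := il_nonneg hb0 (gg_nonneg hδ)
  have hgHasSum : HasSum (gg δ) δ := by
    have h := (gg_summable δ).hasSum
    rwa [gg_tsum] at h
  have hcHasSum : HasSum (il b (gg δ)) ((∑' j, b j) + δ) := il_hasSum hbsum.hasSum hgHasSum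
  have hcsum : Summable (il b (gg δ)) := hcHasSum.summable
  have hctsum : (∑' n, il b (gg δ) n) = τ := by
    rw [hcHasSum.tsum_eq, hδdef]
    ring
  have hTbd : Bornology.IsBounded (achievementSet (il b (gg δ))) := achv_bounded hc0 hcsum
  have hTne : (achievementSet (il b (gg δ))).Nonempty := ⟨0, zero_mem_achv _⟩
  have hTclosed : IsClosed (achievementSet (il b (gg δ))) := (achv_isCompact hc0 hcsum).isClosed
  -- d(E(p (φ i)), S) → 0 along the subsequence
  have hsub : Tendsto (fun i => hausdorffDist (achievementSet (p (φ i))) S) atTop (nhds 0) :=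
    hconv2.comp hφmono.tendsto_atTop
  have hsub' : Tendsto (fun i => hausdorffDist S (achievementSet (p (φ i)))) atTop (nhds 0) :=
    hsub.congr (fun i => hausdorffDist_comm)
  -- S = T
  have hST : hausdorffDist S (achievementSet (il b (gg δ))) = 0 := by
    have hup : ∀ i, hausdorffDist S (achievementSet (il b (gg δ)))
        ≤ hausdorffDist S (achievementSet (p (φ i)))
          + hausdorffDist (achievementSet (p (φ i))) (achievementSet (il b (gg δ))) := by
      intro i
      exact hausdorffDist_triangle
        (hausdorffEdist_ne_top_of_nonempty_of_bounded hSne (hPne _) hSbd (hPbd _))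
    have hlim := hsub'.add hcore
    rw [add_zero] at hlim
    have hle0 : hausdorffDist S (achievementSet (il b (gg δ))) ≤ 0 :=
      le_of_tendsto_of_tendsto' tendsto_const_nhds hlim hup
    exact le_antisymm hle0 hausdorffDist_nonneg
  have hSeqT : S = achievementSet (il b (gg δ)) := by
    have fin : EMetric.hausdorffEdist S (achievementSet (il b (gg δ))) ≠ ⊤ :=
      hausdorffEdist_ne_top_of_nonempty_of_bounded hSne hTne hSbd hTbd
    exact (IsClosed.hausdorffDist_zero_iff_eq hSc.isClosed hTclosed fin).1 hST
  exact ⟨il b (gg δ), hc0, hcsum, by rw [hctsum]; exact hτ1, hSeqT⟩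
end

section
/- The family 𝒜 of achievement sets is nowhere dense in the hyperspace K₀([0,1]) of all nonempty compact subsets of [0,1] that contain 0, equipped with the Hausdorff metric. -/
open TopologicalSpace

/-- The hyperspace of nonempty compact subsets of `[0,1]` containing `0`, with the
Hausdorff metric (as a subspace of the space of nonempty compact subsets of `ℝ`). -/
def K0 : Type :=
  {K : NonemptyCompacts ℝ // (K : Set ℝ) ⊆ Set.Icc 0 1 ∧ (0 : ℝ) ∈ (K : Set ℝ)}

noncomputable instance : MetricSpace K0 := by unfold K0; infer_instance

lemma achv_facts {a : ℕ → ℝ} (ha : ∀ n, 0 ≤ a n) (hs : Summable a) :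
    (∑' n, a n) ∈ achievementSet a ∧
      ∀ x ∈ achievementSet a, x ≤ (∑' n, a n) ∧ (∑' n, a n) - x ∈ achievementSet a := by
  constructor
  · exact ⟨Set.univ, (tsum_univ a).symm⟩
  · rintro x ⟨A, rfl⟩
    have key := hs.tsum_subtype_add_tsum_subtype_compl A
    have h0 : 0 ≤ ∑' n : ↥Aᶜ, a n := tsum_nonneg fun i => ha i
    refine ⟨by linarith, ⟨Aᶜ, by linarith⟩⟩

lemma K0.dist_eq' (x y : K0) : dist x y = Metric.hausdorffDist (x.1 : Set ℝ) (y.1 : Set ℝ) := rfl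

theorem achvFamily_nowhereDense :
    IsNowhereDense {K : K0 | ((K.1 : Set ℝ)) ∈ achvFamily} := by
  set S := {K : K0 | ((K.1 : Set ℝ)) ∈ achvFamily} with hS
  rw [IsNowhereDense, Set.eq_empty_iff_forall_notMem]
  intro K hK
  rcases Metric.mem_nhds_iff.mp (mem_interior_iff_mem_nhds.mp hK) with ⟨ε, hε, hball⟩
  -- basic data
  set e : ℝ := min ε 1 with he
  have he0 : 0 < e := lt_min hε one_pos
  have he1 : e ≤ 1 := min_le_right _ _
  have heε : e ≤ ε := min_le_left _ _
  set Ks : Set ℝ := (K.1 : Set ℝ) with hKs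
  have hKc : IsCompact Ks := K.1.isCompact
  have hKicc : Ks ⊆ Set.Icc 0 1 := K.2.1
  have hK0 : (0 : ℝ) ∈ Ks := K.2.2
  set K1 : Set ℝ := Ks ∪ {e / 2} with hK1
  have hK1c : IsCompact K1 := hKc.union isCompact_singleton
  have hK1icc : K1 ⊆ Set.Icc 0 1 := by
    rintro x (hx | rfl)
    · exact hKicc hx
    · constructor <;> [positivity; linarith]
  set m : ℝ := sSup K1 with hm
  have hK1ne : K1.Nonempty := ⟨e / 2, Or.inr rfl⟩
  have hmmem : m ∈ K1 := hK1c.sSup_mem hK1ne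
  have hlem : ∀ x ∈ K1, x ≤ m := fun x hx => le_csSup hK1c.bddAbove hx
  have hm2 : e / 2 ≤ m := hlem _ (Or.inr rfl)
  have hm1 : m ≤ 1 := (hK1icc hmmem).2
  have hm0 : 0 < m := lt_of_lt_of_le (by linarith) hm2
  -- finite net
  have hcover : K1 ⊆ ⋃ x ∈ K1, Metric.ball x (e / 4) := fun x hx =>
    Set.mem_biUnion hx (Metric.mem_ball_self (by linarith))
  obtain ⟨F0, hF0sub, hF0fin, hF0cov⟩ :=
    hK1c.elim_finite_subcover_image (fun x _ => Metric.isOpen_ball) hcover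
  set F1 : Set ℝ := F0 ∪ {0, m} with hF1
  have hF1fin : F1.Finite := hF0fin.union ((Set.finite_singleton m).insert 0)
  have hF1sub : F1 ⊆ K1 := by
    rintro x (hx | rfl | rfl)
    · exact hF0sub hx
    · exact Or.inl hK0
    · exact hmmem
  -- pick p
  have hioo : (Set.Ioo (0 : ℝ) (min (e / 4) (m / 2))).Infinite :=
    Set.Ioo_infinite (lt_min (by linarith) (by linarith))
  obtain ⟨p, hpI, hpF1⟩ := (hioo.diff hF1fin).nonempty
  have hp0 : 0 < p := hpI.1
  have hpe : p < e / 4 := lt_of_lt_of_le hpI.2 (min_le_left _ _)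
  have hpm : p < m / 2 := lt_of_lt_of_le hpI.2 (min_le_right _ _)
  set q : ℝ := m - p with hq
  set F : Set ℝ := F1 ∪ {q} with hF
  have hFfin : F.Finite := hF1fin.union (Set.finite_singleton _)
  have hqF : q ∈ F := Or.inr rfl
  have hpnotF : p ∉ F := by
    rintro (h | h)
    · exact hpF1 h
    · rw [Set.mem_singleton_iff] at h; rw [h] at hpm; linarith
  have hFicc : F ⊆ Set.Icc 0 1 := by
    rintro x (hx | rfl)
    · exact hK1icc (hF1sub hx)
    · exact ⟨by linarith, by linarith⟩
  have h0F : (0 : ℝ) ∈ F := Or.inl (Or.inr (Or.inl rfl))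
  have hFlem : ∀ x ∈ F, x ≤ m := by
    rintro x (hx | rfl)
    · exact hlem _ (hF1sub hx)
    · linarith
  have hmF : m ∈ F := Or.inl (Or.inr (Or.inr rfl))
  -- delta
  set δ : ℝ := Metric.infDist p F / 3 with hδdef
  have hFne : F.Nonempty := ⟨q, hqF⟩
  have hδ0 : 0 < δ := by
    have := (hFfin.isClosed.notMem_iff_infDist_pos hFne).mp hpnotF
    positivity
  -- K'
  set K' : K0 := ⟨⟨⟨F, hFfin.isCompact⟩, hFne⟩, hFicc, h0F⟩ with hK'
  have hK'set : (K'.1 : Set ℝ) = F := rfl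
  -- dist K' K < ε
  have hdKK' : dist K' K < ε := by
    rw [K0.dist_eq', hK'set, ← hKs]
    have hb : Metric.hausdorffDist F Ks ≤ 3 * e / 4 := by
      apply Metric.hausdorffDist_le_of_mem_dist (by linarith)
      · rintro y (hy | rfl)
        · rcases hF1sub hy with h | h
          · exact ⟨y, h, by rw [dist_self]; linarith⟩
          · rw [Set.mem_singleton_iff] at h
            exact ⟨0, hK0, by rw [h, Real.dist_eq]; rw [abs_of_nonneg (by linarith)]; linarith⟩
        · rcases hmmem with h | h
          · exact ⟨m, h, by rw [Real.dist_eq, hq]; rw [abs_of_nonpos (by linarith)]; linarith⟩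
          · rw [Set.mem_singleton_iff] at h
            refine ⟨0, hK0, ?_⟩
            rw [Real.dist_eq, hq, h, abs_of_nonneg (by linarith)]
            linarith
      · intro x hx
        have := hF0cov (Or.inl hx)
        rw [Set.mem_iUnion₂] at this
        obtain ⟨f, hf, hxf⟩ := this
        rw [Metric.mem_ball, dist_comm] at hxf
        exact ⟨f, Or.inl (Or.inl hf), by rw [dist_comm] at hxf; linarith⟩
    calc Metric.hausdorffDist F Ks ≤ 3 * e / 4 := hb
    _ < e := by linarith
    _ ≤ ε := heε
  -- K' ∈ closure S
  have hcl : K' ∈ closure S := hball (Metric.mem_ball.mpr hdKK')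
  obtain ⟨L, hLS, hdist⟩ := Metric.mem_closure_iff.mp hcl δ hδ0
  obtain ⟨a, ha, hsum, _, hE⟩ := hLS
  set E : Set ℝ := (L.1 : Set ℝ) with hEset
  obtain ⟨hσE, hsymm⟩ := achv_facts ha hsum
  rw [← hE] at hσE hsymm
  set σ : ℝ := ∑' n, a n with hσ
  -- Hausdorff distance facts
  rw [K0.dist_eq', hK'set] at hdist
  have hEne : E.Nonempty := L.1.nonempty
  have hfin : EMetric.hausdorffEdist F E ≠ ⊤ :=
    Metric.hausdorffEdist_ne_top_of_nonempty_of_bounded hFne hEne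
      hFfin.isBounded L.1.isCompact.isBounded
  -- (1) m close to some y in E
  obtain ⟨y, hyE, hy⟩ := Metric.exists_dist_lt_of_hausdorffDist_lt hmF hdist hfin
  have hyσ : y ≤ σ := (hsymm y hyE).1
  have h1 : m - σ < δ := by
    rw [Real.dist_eq] at hy
    have := abs_lt.mp hy
    linarith [this.1, this.2]
  -- (2) σ close to some w' in F
  obtain ⟨w', hw'F, hw'⟩ := Metric.exists_dist_lt_of_hausdorffDist_lt' hσE hdist hfin
  have h2 : σ - m < δ := by
    rw [Real.dist_eq] at hw'
    have := abs_lt.mp hw'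
    have := hFlem w' hw'F
    linarith
  -- (3) q close to z in E, then σ - z close to w in F
  obtain ⟨z, hzE, hz⟩ := Metric.exists_dist_lt_of_hausdorffDist_lt hqF hdist hfin
  have hσzE : σ - z ∈ E := (hsymm z hzE).2
  obtain ⟨w, hwF, hw⟩ := Metric.exists_dist_lt_of_hausdorffDist_lt' hσzE hdist hfin
  -- contradiction
  have hinf : Metric.infDist p F ≤ dist p w := Metric.infDist_le_dist_of_mem hwF
  rw [Real.dist_eq] at hz hw hinf
  have hz1 := abs_lt.mp hz
  have hw1 := abs_lt.mp hw
  have habs : |p - w| < 3 * δ := by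
    rw [abs_lt]
    constructor <;> linarith [hq, hz1.1, hz1.2, hw1.1, hw1.2, h1, h2]
  have h3δ : Metric.infDist p F = 3 * δ := by rw [hδdef]; ring
  rw [h3δ] at hinf
  linarith
end
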